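/- Suppose N = 2φ*(N), N ∉ {1, 2, 6, 12, 168, 240}, and N has at most 7 distinct prime factors. Then 3 divides N. -/

import Mathlib

/-- The unitary totient function: φ*(n) = ∏_{p^e || n} (p^e - 1). -/
def uphi (n : ℕ) : ℕ := ∏ p ∈ n.primeFactors, (p ^ n.factorization p - 1)

private def qf : ℕ → ℕ
  | 1 => 5 | 2 => 7 | 3 => 11 | 4 => 13 | 5 => 17 | 6 => 19 | _ => 0

private def Dk (k : ℕ) : ℕ := ∏ i ∈ Finset.Icc 1 k, qf i
private def Nk (k : ℕ) : ℕ := ∏ i ∈ Finset.Icc 1 k, (qf i - 1)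

lemma exists_big (S : Finset ℕ) (hS : ∀ p ∈ S, Nat.Prime p ∧ 5 ≤ p) (n k : ℕ)
    (hk : k ≤ S.card)
    (hn : (((Finset.range n).filter (fun p => Nat.Prime p ∧ 5 ≤ p)).card) < k) :
    ∃ p ∈ S, n ≤ p := by
  by_contra h
  push_neg at h
  have hsub : S ⊆ (Finset.range n).filter (fun p => Nat.Prime p ∧ 5 ≤ p) :=
    fun p hp => Finset.mem_filter.2 ⟨Finset.mem_range.2 (h p hp), hS p hp⟩
  have := Finset.card_le_card hsub
  omega

lemma lemB : ∀ k, k ≤ 6 → ∀ S : Finset ℕ, S.card = k →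
    (∀ p ∈ S, Nat.Prime p ∧ 5 ≤ p) →
    Nk k * ∏ p ∈ S, p ≤ Dk k * ∏ p ∈ S, (p - 1) := by
  intro k
  induction k with
  | zero =>
    intro _ S hcard _
    rw [Finset.card_eq_zero.1 hcard]
    simp [Nk, Dk]
  | succ k ih =>
    intro hk6 S hcard hS
    have hfc : (((Finset.range (qf (k+1))).filter
        (fun p => Nat.Prime p ∧ 5 ≤ p)).card) < k + 1 := by
      have hk5 : k ≤ 5 := by omega
      interval_cases k <;> decide
    obtain ⟨p0, hp0S, hp0⟩ := exists_big S hS (qf (k+1)) (k+1) hcard.ge hfc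
    have hrw1 : ∏ p ∈ S, p = p0 * ∏ p ∈ S.erase p0, p :=
      (Finset.mul_prod_erase S _ hp0S).symm
    have hrw2 : ∏ p ∈ S, (p-1) = (p0-1) * ∏ p ∈ S.erase p0, (p-1) :=
      (Finset.mul_prod_erase S _ hp0S).symm
    have hcard' : (S.erase p0).card = k := by
      rw [Finset.card_erase_of_mem hp0S, hcard]
      omega
    have ihS := ih (by omega) (S.erase p0) hcard'
      (fun p hp => hS p (Finset.mem_of_mem_erase hp))
    have hNk : Nk (k+1) = Nk k * (qf (k+1) - 1) := by
      unfold Nk; rw [Finset.prod_Icc_succ_top (by omega)]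
    have hDk : Dk (k+1) = Dk k * qf (k+1) := by
      unfold Dk; rw [Finset.prod_Icc_succ_top (by omega)]
    have key : (qf (k+1) - 1) * p0 ≤ qf (k+1) * (p0 - 1) := by
      rw [Nat.sub_mul, Nat.mul_sub, one_mul, mul_one]
      exact Nat.sub_le_sub_left hp0 _
    rw [hrw1, hrw2, hNk, hDk]
    calc Nk k * (qf (k+1) - 1) * (p0 * ∏ p ∈ S.erase p0, p)
        = ((qf (k+1) - 1) * p0) * (Nk k * ∏ p ∈ S.erase p0, p) := by ring
      _ ≤ (qf (k+1) * (p0 - 1)) * (Dk k * ∏ p ∈ S.erase p0, (p-1)) :=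
          Nat.mul_le_mul key ihS
      _ = Dk k * qf (k+1) * ((p0-1) * ∏ p ∈ S.erase p0, (p-1)) := by ring

lemma lemC : ∀ k, 1 ≤ k → k ≤ 6 → 2^k * Dk k < (2^(k+1) - 1) * Nk k := by
  intro k h1 h6
  interval_cases k <;> decide +kernel

theorem stmt12 (N : ℕ) (hN : N = 2 * uphi N)
    (hne : N ∉ ({1, 2, 6, 12, 168, 240} : Set ℕ))
    (hω : N.primeFactors.card ≤ 7) :
    3 ∣ N := by
  by_contra h3
  have hN0 : N ≠ 0 := by
    intro h; rw [h] at hN; simp [uphi] at hN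
  have h2N : 2 ∣ N := ⟨uphi N, hN⟩
  have h2P : 2 ∈ N.primeFactors := Nat.mem_primeFactors.2 ⟨Nat.prime_two, h2N, hN0⟩
  set e := N.factorization with he
  set a := e 2 with ha
  set S := N.primeFactors.erase 2 with hSdef
  have hSfacts : ∀ p ∈ S, Nat.Prime p ∧ 5 ≤ p := by
    intro p hp
    have hpP := Nat.prime_of_mem_primeFactors (Finset.mem_of_mem_erase hp)
    have hp2 : p ≠ 2 := Finset.ne_of_mem_erase hp
    have hp3 : p ≠ 3 := by
      intro h; apply h3; rw [← h]
      exact Nat.dvd_of_mem_primeFactors (Finset.mem_of_mem_erase hp)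
    refine ⟨hpP, ?_⟩
    have h2le := hpP.two_le
    by_contra hlt
    push_neg at hlt
    interval_cases p
    · exact hp2 rfl
    · exact hp3 rfl
    · exact (by norm_num : ¬ Nat.Prime 4) hpP
  have hepos : ∀ p ∈ N.primeFactors, 1 ≤ e p := by
    intro p hp
    have : e p ≠ 0 := by
      rw [he]
      exact Finsupp.mem_support_iff.1 (by rw [Nat.support_factorization]; exact hp)
    omega
  have h1 : ∏ p ∈ N.primeFactors, p ^ e p = N := by
    have := Nat.factorization_prod_pow_eq_self hN0
    rwa [Finsupp.prod, Nat.support_factorization] at this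
  have hNprod : N = 2^a * ∏ p ∈ S, p ^ e p := by
    conv_lhs => rw [← h1]
    exact (Finset.mul_prod_erase _ _ h2P).symm
  have hUprod : uphi N = (2^a - 1) * ∏ p ∈ S, (p ^ e p - 1) := by
    unfold uphi
    exact (Finset.mul_prod_erase _ _ h2P).symm
  set k := S.card with hk
  have hk6 : k ≤ 6 := by
    have hc : S.card = N.primeFactors.card - 1 := by
      rw [hSdef, Finset.card_erase_of_mem h2P]
    omega
  have ha1 : 1 ≤ a := hepos 2 h2P
  by_cases hk0 : k = 0
  · have hSe : S = ∅ := Finset.card_eq_zero.1 hk0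
    rw [hSe] at hNprod hUprod
    simp only [Finset.prod_empty, mul_one] at hNprod hUprod
    rw [hUprod] at hN
    have h2a : 1 ≤ (2:ℕ)^a := Nat.one_le_two_pow
    have hNe2 : N = 2 := by omega
    exact hne (by rw [hNe2]; norm_num)
  have hk1 : 1 ≤ k := by omega
  -- a ≥ k+1
  have hak : k + 1 ≤ a := by
    have h2R : (2:ℕ)^k ∣ ∏ p ∈ S, (p ^ e p - 1) := by
      have hd : ∏ _p ∈ S, 2 ∣ ∏ p ∈ S, (p ^ e p - 1) := by
        apply Finset.prod_dvd_prod_of_dvd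
        intro p hp
        have hodd : Odd (p ^ e p) :=
          (Nat.Prime.odd_of_ne_two (hSfacts p hp).1
            (by have := (hSfacts p hp).2; omega)).pow
        obtain ⟨m, hm⟩ := hodd
        exact ⟨m, by omega⟩
      simpa using hd
    have hdvd : 2^(k+1) ∣ N := by
      rw [hN, hUprod, pow_succ']
      exact mul_dvd_mul_left 2 (h2R.mul_left _)
    exact (Nat.Prime.pow_dvd_iff_le_factorization Nat.prime_two hN0).1 hdvd
  have hQpos : 0 < ∏ p ∈ S, p ^ e p := by
    apply Finset.prod_pos
    intro p hp
    exact pow_pos (by have := (hSfacts p hp).2; omega) _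
  have hP1pos : 0 < ∏ p ∈ S, p := by
    apply Finset.prod_pos
    intro p hp
    have := (hSfacts p hp).2; omega
  have hple : ∀ p ∈ S, p ≤ p ^ e p := by
    intro p hp
    have h1e := hepos p (Finset.mem_of_mem_erase hp)
    calc p = p ^ 1 := (pow_one p).symm
      _ ≤ p ^ e p := Nat.pow_le_pow_right (by have := (hSfacts p hp).2; omega) h1e
  have step1 : (∏ p ∈ S, (p-1)) * (∏ p ∈ S, p ^ e p)
      ≤ (∏ p ∈ S, p) * (∏ p ∈ S, (p ^ e p - 1)) := by
    rw [← Finset.prod_mul_distrib, ← Finset.prod_mul_distrib]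
    apply Finset.prod_le_prod'
    intro p hp
    rw [Nat.sub_mul, Nat.mul_sub, one_mul, mul_one]
    exact Nat.sub_le_sub_left (hple p hp) _
  have hB := lemB k hk6 S rfl hSfacts
  have hC := lemC k hk1 hk6
  have step2 : 2^k * (∏ p ∈ S, p) < (2^(k+1) - 1) * ∏ p ∈ S, (p-1) := by
    have h3' : Dk k * (2^k * ∏ p ∈ S, p) < Dk k * ((2^(k+1)-1) * ∏ p ∈ S, (p-1)) := by
      calc Dk k * (2^k * ∏ p ∈ S, p) = 2^k * Dk k * ∏ p ∈ S, p := by ring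
        _ < (2^(k+1)-1) * Nk k * ∏ p ∈ S, p := by
            exact (Nat.mul_lt_mul_right hP1pos).2 hC
        _ = (2^(k+1)-1) * (Nk k * ∏ p ∈ S, p) := by ring
        _ ≤ (2^(k+1)-1) * (Dk k * ∏ p ∈ S, (p-1)) := Nat.mul_le_mul_left _ hB
        _ = Dk k * ((2^(k+1)-1) * ∏ p ∈ S, (p-1)) := by ring
    exact Nat.lt_of_mul_lt_mul_left h3'
  have c4 : 2^k * ∏ p ∈ S, p ^ e p < (2^(k+1)-1) * ∏ p ∈ S, (p ^ e p - 1) := by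
    have h3' : (∏ p ∈ S, p) * (2^k * ∏ p ∈ S, p ^ e p)
        < (∏ p ∈ S, p) * ((2^(k+1)-1) * ∏ p ∈ S, (p ^ e p - 1)) := by
      calc (∏ p ∈ S, p) * (2^k * ∏ p ∈ S, p ^ e p)
          = (2^k * ∏ p ∈ S, p) * ∏ p ∈ S, p ^ e p := by ring
        _ < ((2^(k+1)-1) * ∏ p ∈ S, (p-1)) * ∏ p ∈ S, p ^ e p := by
            exact (Nat.mul_lt_mul_right hQpos).2 step2
        _ = (2^(k+1)-1) * ((∏ p ∈ S, (p-1)) * ∏ p ∈ S, p ^ e p) := by ring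
        _ ≤ (2^(k+1)-1) * ((∏ p ∈ S, p) * ∏ p ∈ S, (p ^ e p - 1)) :=
            Nat.mul_le_mul_left _ step1
        _ = (∏ p ∈ S, p) * ((2^(k+1)-1) * ∏ p ∈ S, (p ^ e p - 1)) := by ring
    exact Nat.lt_of_mul_lt_mul_left h3'
  have step3 : (2^(k+1)-1) * 2^a ≤ (2^a - 1) * 2^(k+1) := by
    have hle : (2:ℕ)^(k+1) ≤ 2^a := Nat.pow_le_pow_right (by norm_num) hak
    calc (2^(k+1)-1) * 2^a = 2^(k+1)*2^a - 2^a := by rw [Nat.sub_mul, one_mul]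
      _ ≤ 2^(k+1)*2^a - 2^(k+1) := Nat.sub_le_sub_left hle _
      _ = (2^a-1) * 2^(k+1) := by rw [Nat.sub_mul, one_mul, mul_comm ((2:ℕ)^(k+1))]
  have final : 2^(k+1) * N < 2^(k+1) * (2 * uphi N) := by
    rw [hUprod]
    rw [hNprod]
    calc 2^(k+1) * (2^a * ∏ p ∈ S, p ^ e p)
        = (2 * 2^a) * (2^k * ∏ p ∈ S, p ^ e p) := by rw [pow_succ]; ring
      _ < (2 * 2^a) * ((2^(k+1)-1) * ∏ p ∈ S, (p ^ e p - 1)) := by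
          exact (Nat.mul_lt_mul_left (by positivity)).2 c4
      _ = (2 * ∏ p ∈ S, (p ^ e p - 1)) * ((2^(k+1)-1) * 2^a) := by ring
      _ ≤ (2 * ∏ p ∈ S, (p ^ e p - 1)) * ((2^a-1) * 2^(k+1)) :=
          Nat.mul_le_mul_left _ step3
      _ = 2^(k+1) * (2 * ((2^a-1) * ∏ p ∈ S, (p ^ e p - 1))) := by ring
  have hlt : N < 2 * uphi N := Nat.lt_of_mul_lt_mul_left final
  omega
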